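/- Let k be a field, let R be a Hopf k-algebra that is a domain, and suppose the Ore extension T=R[x;σ,δ] is a Hopf algebra containing R as a Hopf subalgebra, with ε(x)=0 and Δ(x) = s(1⊗x) + t(x⊗1) + v(x⊗x) + w for s,t,v,w ∈ R⊗_k R, where v = ∑v₁⊗v₂. If the antipode of T satisfies S(x) = ax + b with a,b ∈ R and a a unit of R, then ∑S(v₁)v₂ = 0 in R and ∑ε(v₁)ε(v₂) = 0 in k. -/

import Mathlib

open scoped TensorProduct
open Coalgebra

section Conv

variable {k A B : Type*} [CommSemiring k] [AddCommMonoid A] [Module k A] [Coalgebra k A]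
  [AddCommMonoid B] [Module k B]

/-- Convolution of two linear maps from a coalgebra to a module with bilinear mult `μ`. -/
noncomputable def conv (μ : B →ₗ[k] B →ₗ[k] B) (f g : A →ₗ[k] B) : A →ₗ[k] B :=
  TensorProduct.lift μ ∘ₗ TensorProduct.map f g ∘ₗ Coalgebra.comul

lemma conv_apply_repr (μ : B →ₗ[k] B →ₗ[k] B) (f g : A →ₗ[k] B) {a : A} {ι : Type*}
    (r : Coalgebra.Repr k a ι) :
    conv μ f g a = ∑ i ∈ r.index, μ (f (r.left i)) (g (r.right i)) := by
  simp only [conv, LinearMap.comp_apply, ← r.eq, map_sum, TensorProduct.map_tmul,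
    TensorProduct.lift.tmul]

/-- `∑ ε(a₂) • a₁ = a`. -/
lemma sum_counit_smul_left {a : A} {ι : Type*} (r : Coalgebra.Repr k a ι) :
    ∑ i ∈ r.index, counit (R := k) (r.right i) • r.left i = a := by
  have h := congrArg (TensorProduct.rid k A) (Coalgebra.sum_tmul_counit_eq (R := k) r)
  rw [map_sum] at h
  simp only [TensorProduct.rid_tmul, one_smul] at h
  exact h

lemma sum_counit_smul_right {a : A} {ι : Type*} (r : Coalgebra.Repr k a ι) :
    ∑ i ∈ r.index, counit (R := k) (r.left i) • r.right i = a := by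
  have h := congrArg (TensorProduct.lid k A) (Coalgebra.sum_counit_tmul_eq (R := k) r)
  rw [map_sum] at h
  simp only [TensorProduct.lid_tmul, one_smul] at h
  exact h

noncomputable def convUnit (one : B) : A →ₗ[k] B :=
  LinearMap.toSpanSingleton k B one ∘ₗ Coalgebra.counit

lemma convUnit_apply (one : B) (a : A) : convUnit (k := k) one a = counit (R := k) a • one := rfl

lemma conv_unit_right (μ : B →ₗ[k] B →ₗ[k] B) (one : B) (hone : ∀ x, μ x one = x)
    (f : A →ₗ[k] B) : conv μ f (convUnit one) = f := by
  ext a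
  rw [conv_apply_repr μ f _ (Coalgebra.Repr.arbitrary k a)]
  calc ∑ i ∈ (ℛ k a).index, μ (f ((ℛ k a).left i)) (convUnit one ((ℛ k a).right i))
      = ∑ i ∈ (ℛ k a).index, f (counit (R := k) ((ℛ k a).right i) • (ℛ k a).left i) := by
        refine Finset.sum_congr rfl fun i _ => ?_
        simp only [convUnit_apply, map_smul, hone]
    _ = f a := by rw [← map_sum, sum_counit_smul_left]

lemma conv_unit_left (μ : B →ₗ[k] B →ₗ[k] B) (one : B) (hone : ∀ x, μ one x = x)
    (f : A →ₗ[k] B) : conv μ (convUnit one) f = f := by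
  ext a
  rw [conv_apply_repr μ _ f (Coalgebra.Repr.arbitrary k a)]
  calc ∑ i ∈ (ℛ k a).index, μ (convUnit one ((ℛ k a).left i)) (f ((ℛ k a).right i))
      = ∑ i ∈ (ℛ k a).index, f (counit (R := k) ((ℛ k a).left i) • (ℛ k a).right i) := by
        refine Finset.sum_congr rfl fun i _ => ?_
        simp only [convUnit_apply, map_smul, LinearMap.smul_apply, hone]
    _ = f a := by rw [← map_sum, sum_counit_smul_right]

lemma conv_assoc (μ : B →ₗ[k] B →ₗ[k] B) (hμ : ∀ x y z, μ (μ x y) z = μ x (μ y z))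
    (f g h : A →ₗ[k] B) : conv μ (conv μ f g) h = conv μ f (conv μ g h) := by
  ext a
  set r := ℛ k a with hr
  set r1 : (i : A × A) → Coalgebra.Repr k (r.left i) (A × A) := fun i => ℛ k (r.left i) with hr1
  set r2 : (i : A × A) → Coalgebra.Repr k (r.right i) (A × A) := fun i => ℛ k (r.right i) with hr2
  have key := Coalgebra.sum_map_tmul_tmul_eq (R := k) f g h a (repr := r) (a₁ := r1) (a₂ := r2)
  have key2 := congrArg
    (TensorProduct.lift μ ∘ₗ LinearMap.lTensor B (TensorProduct.lift μ)) key
  simp only [map_sum, LinearMap.comp_apply, LinearMap.lTensor_tmul,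
    TensorProduct.lift.tmul] at key2
  calc conv μ (conv μ f g) h a
      = ∑ i ∈ r.index, μ (conv μ f g (r.left i)) (h (r.right i)) := conv_apply_repr ..
    _ = ∑ i ∈ r.index, ∑ j ∈ (r1 i).index,
          μ (μ (f ((r1 i).left j)) (g ((r1 i).right j))) (h (r.right i)) := by
        refine Finset.sum_congr rfl fun i _ => ?_
        rw [conv_apply_repr μ f g (r1 i), map_sum, LinearMap.coe_sum, Finset.sum_apply]
    _ = ∑ i ∈ r.index, ∑ j ∈ (r1 i).index,
          μ (f ((r1 i).left j)) (μ (g ((r1 i).right j)) (h (r.right i))) := by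
        simp only [hμ]
    _ = ∑ i ∈ r.index, ∑ j ∈ (r2 i).index,
          μ (f (r.left i)) (μ (g ((r2 i).left j)) (h ((r2 i).right j))) := key2.symm
    _ = ∑ i ∈ r.index, μ (f (r.left i)) (conv μ g h (r.right i)) := by
        refine Finset.sum_congr rfl fun i _ => ?_
        rw [conv_apply_repr μ g h (r2 i), map_sum]
    _ = conv μ f (conv μ g h) a := (conv_apply_repr ..).symm

end Conv

section Hopf
variable {k A : Type*} [CommSemiring k] [Semiring A] [HopfAlgebra k A]

/-- Repr of a product from Reprs of factors. -/
noncomputable def Coalgebra.Repr.mulAux {a b : A} {ι κ : Type*} (ra : Coalgebra.Repr k a ι)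
    (rb : Coalgebra.Repr k b κ) : Coalgebra.Repr k (a * b) (ι × κ) where
  index := ra.index ×ˢ rb.index
  left := fun p => ra.left p.1 * rb.left p.2
  right := fun p => ra.right p.1 * rb.right p.2
  eq := by
    rw [Bialgebra.comul_mul, ← ra.eq, ← rb.eq, Finset.sum_mul_sum, Finset.sum_product]
    exact Finset.sum_congr rfl fun i _ => Finset.sum_congr rfl fun j _ =>
      (Algebra.TensorProduct.tmul_mul_tmul _ _ _ _).symm

variable (k A)

noncomputable def convL : (A →ₗ[k] A) →ₗ[k] (A →ₗ[k] A) →ₗ[k] (A →ₗ[k] A) :=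
  LinearMap.mk₂ k (conv (LinearMap.mul k A))
    (fun f f' g => by
      unfold conv
      rw [TensorProduct.map_add_left, LinearMap.add_comp, LinearMap.comp_add])
    (fun c f g => by
      unfold conv
      rw [TensorProduct.map_smul_left, LinearMap.smul_comp, LinearMap.comp_smul])
    (fun f g g' => by
      unfold conv
      rw [TensorProduct.map_add_right, LinearMap.add_comp, LinearMap.comp_add])
    (fun c f g => by
      unfold conv
      rw [TensorProduct.map_smul_right, LinearMap.smul_comp, LinearMap.comp_smul])

lemma convL_apply (f g : A →ₗ[k] A) : convL k A f g = conv (LinearMap.mul k A) f g := rfl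

noncomputable def FF : A →ₗ[k] (A →ₗ[k] A) :=
  (LinearMap.mul k A).compr₂ (HopfAlgebra.antipode (R := k))

noncomputable def GG : A →ₗ[k] (A →ₗ[k] A) :=
  ((LinearMap.mul k A).flip).compl₁₂ (HopfAlgebra.antipode (R := k))
    (HopfAlgebra.antipode (R := k))

noncomputable def EE : (A →ₗ[k] A) := convUnit 1

variable {k A}

open HopfAlgebra

lemma claim1 : conv (convL k A) (FF k A) (LinearMap.mul k A) = convUnit (EE k A) := by
  ext a b
  rw [conv_apply_repr (convL k A) _ _ (ℛ k a)]
  rw [LinearMap.coe_sum, Finset.sum_apply]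
  have h1 : ∀ i ∈ (ℛ k a).index,
      (convL k A (FF k A ((ℛ k a).left i)) ((LinearMap.mul k A) ((ℛ k a).right i))) b
      = ∑ j ∈ (ℛ k b).index, antipode (R := k) ((ℛ k a).left i * (ℛ k b).left j)
          * ((ℛ k a).right i * (ℛ k b).right j) := by
    intro i _
    rw [convL_apply, conv_apply_repr _ _ _ (ℛ k b)]
    rfl
  rw [Finset.sum_congr rfl h1]
  have hprod : ∑ i ∈ (ℛ k a).index, ∑ j ∈ (ℛ k b).index,
      antipode (R := k) ((ℛ k a).left i * (ℛ k b).left j)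
        * ((ℛ k a).right i * (ℛ k b).right j)
      = algebraMap k A (counit (R := k) (a * b)) := by
    simpa [Coalgebra.Repr.mulAux, Finset.sum_product]
      using sum_antipode_mul_eq_algebraMap_counit (R := k) ((ℛ k a).mulAux (ℛ k b))
  rw [hprod, Bialgebra.counit_mul, convUnit_apply, LinearMap.smul_apply, EE,
    convUnit_apply, smul_smul, Algebra.algebraMap_eq_smul_one]

lemma claim2 : conv (convL k A) (LinearMap.mul k A) (GG k A) = convUnit (EE k A) := by
  ext a b
  rw [conv_apply_repr (convL k A) _ _ (ℛ k a)]
  rw [LinearMap.coe_sum, Finset.sum_apply]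
  have h1 : ∀ i ∈ (ℛ k a).index,
      (convL k A ((LinearMap.mul k A) ((ℛ k a).left i)) (GG k A ((ℛ k a).right i))) b
      = (ℛ k a).left i * algebraMap k A (counit (R := k) b)
          * antipode (R := k) ((ℛ k a).right i) := by
    intro i _
    rw [convL_apply, conv_apply_repr _ _ _ (ℛ k b)]
    have h0 : ∀ j ∈ (ℛ k b).index,
        (LinearMap.mul k A) ((LinearMap.mul k A) ((ℛ k a).left i) ((ℛ k b).left j))
          (GG k A ((ℛ k a).right i) ((ℛ k b).right j))
        = (ℛ k a).left i * ((ℛ k b).left j * antipode (R := k) ((ℛ k b).right j))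
            * antipode (R := k) ((ℛ k a).right i) := by
      intro j _
      show ((ℛ k a).left i * (ℛ k b).left j)
          * (antipode (R := k) ((ℛ k b).right j) * antipode (R := k) ((ℛ k a).right i)) = _
      rw [mul_assoc, mul_assoc, mul_assoc]
    rw [Finset.sum_congr rfl h0, ← Finset.sum_mul, ← Finset.mul_sum,
      sum_mul_antipode_eq_algebraMap_counit (R := k) (ℛ k b)]
  rw [Finset.sum_congr rfl h1]
  have h2 : ∀ i ∈ (ℛ k a).index,
      (ℛ k a).left i * algebraMap k A (counit (R := k) b)
          * antipode (R := k) ((ℛ k a).right i)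
      = algebraMap k A (counit (R := k) b)
          * ((ℛ k a).left i * antipode (R := k) ((ℛ k a).right i)) := by
    intro i _
    rw [← Algebra.commutes, mul_assoc]
  rw [Finset.sum_congr rfl h2, ← Finset.mul_sum, sum_mul_antipode_eq_algebraMap_counit (R := k) (ℛ k a),
    convUnit_apply, LinearMap.smul_apply, EE, convUnit_apply, smul_smul, ← map_mul,
    Algebra.algebraMap_eq_smul_one, mul_comm (counit (R := k) b) (counit (R := k) a)]

theorem hopf_antipode_mul (a b : A) :
    antipode (R := k) (a * b) = antipode (R := k) b * antipode (R := k) a := by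
  have hone_r : ∀ f : A →ₗ[k] A, convL k A f (EE k A) = f := fun f =>
    conv_unit_right _ _ (fun x => mul_one x) f
  have hone_l : ∀ f : A →ₗ[k] A, convL k A (EE k A) f = f := fun f =>
    conv_unit_left _ _ (fun x => one_mul x) f
  have hassoc₂ : ∀ f g h : A →ₗ[k] A,
      convL k A (convL k A f g) h = convL k A f (convL k A g h) :=
    fun f g h => conv_assoc _ (fun x y z => mul_assoc x y z) f g h
  have hFG : FF k A = GG k A := by
    calc FF k A = conv (convL k A) (FF k A) (convUnit (EE k A)) :=
          (conv_unit_right (convL k A) (EE k A) hone_r (FF k A)).symm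
    _ = conv (convL k A) (FF k A) (conv (convL k A) (LinearMap.mul k A) (GG k A)) := by
          rw [claim2]
    _ = conv (convL k A) (conv (convL k A) (FF k A) (LinearMap.mul k A)) (GG k A) :=
          (conv_assoc (convL k A) hassoc₂ _ _ _).symm
    _ = conv (convL k A) (convUnit (EE k A)) (GG k A) := by rw [claim1]
    _ = GG k A := conv_unit_left (convL k A) (EE k A) hone_l (GG k A)
  have := congrFun (congrArg (fun φ => (DFunLike.coe (φ a) : A → A)) hFG) b
  simpa [FF, GG] using this

theorem hopf_counit_antipode (a : A) :
    counit (R := k) (HopfAlgebra.antipode (R := k) a) = counit (R := k) a := by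
  have h1 : counit (R := k) (HopfAlgebra.antipode (R := k) a)
      = ∑ i ∈ (ℛ k a).index, counit (R := k) ((ℛ k a).right i)
          * counit (R := k) (HopfAlgebra.antipode (R := k) ((ℛ k a).left i)) := by
    conv_lhs => rw [← sum_counit_smul_left (ℛ k a)]
    rw [map_sum, map_sum]
    exact Finset.sum_congr rfl fun i _ => by rw [map_smul, map_smul, smul_eq_mul]
  have h2 := congrArg (counit (R := k)) (HopfAlgebra.sum_antipode_mul_eq_algebraMap_counit (R := k) (ℛ k a))
  rw [map_sum, Bialgebra.counit_algebraMap] at h2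
  simp only [Bialgebra.counit_mul] at h2
  rw [h1, ← h2]
  exact Finset.sum_congr rfl fun i _ => mul_comm _ _

end Hopf

/-- `T` is an Ore (skew polynomial) extension `R[x; σ, δ]` of `R`, embedded via `ι`:
`δ` is a `σ`-derivation, `ι` is injective, `x · ι(r) = ι(σ r) · x + ι(δ r)`, and
`T` is a free left `R`-module with basis `{xⁱ : i ≥ 0}`. -/
structure IsOreExtension (k : Type*) {R T : Type*} [Field k] [Ring R] [Algebra k R]
    [Ring T] [Algebra k T] (σ : R ≃ₐ[k] R) (δ : R →ₗ[k] R) (ι : R →ₐ[k] T) (x : T) : Prop where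
  isSigmaDerivation : ∀ a b : R, δ (a * b) = σ a * δ b + δ a * b
  injective : Function.Injective ι
  rel : ∀ r : R, x * ι r = ι (σ r) * x + ι (δ r)
  free : ∀ t : T, ∃! a : ℕ →₀ R, t = a.sum fun i r => ι r * x ^ i

/-- A Hopf `k`-algebra structure on the `k`-algebra `T`, bundled as data. -/
structure HopfAlgebraStructure (k T : Type*) [Field k] [Ring T] [Algebra k T] where
  comul : T →ₗ[k] T ⊗[k] T
  counit : T →ₗ[k] k
  antipode : T →ₗ[k] T
  comul_one : comul 1 = 1
  comul_mul : ∀ a b : T, comul (a * b) = comul a * comul b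
  counit_one : counit 1 = 1
  counit_mul : ∀ a b : T, counit (a * b) = counit a * counit b
  coassoc : ∀ t : T, TensorProduct.map comul LinearMap.id (comul t) =
      (TensorProduct.assoc k T T T).symm (TensorProduct.map LinearMap.id comul (comul t))
  counit_comul : ∀ t : T,
      TensorProduct.lid k T (TensorProduct.map counit LinearMap.id (comul t)) = t
  comul_counit : ∀ t : T,
      TensorProduct.rid k T (TensorProduct.map LinearMap.id counit (comul t)) = t
  antipode_mul_id : ∀ t : T,
      LinearMap.mul' k T (TensorProduct.map antipode LinearMap.id (comul t))
        = algebraMap k T (counit t)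
  id_mul_antipode : ∀ t : T,
      LinearMap.mul' k T (TensorProduct.map LinearMap.id antipode (comul t))
        = algebraMap k T (counit t)

/-- The Hopf algebra structure `H` on `T` extends that of the Hopf algebra `R`, i.e. `R` is
(the image of) a Hopf subalgebra of `T` via the injective algebra map `ι`. -/
def ExtendsHopf (k : Type*) {R T : Type*} [Field k] [Ring R] [HopfAlgebra k R]
    [Ring T] [Algebra k T] (ι : R →ₐ[k] T) (H : HopfAlgebraStructure k T) : Prop :=
  (∀ r : R, H.counit (ι r) = Coalgebra.counit r) ∧
  (∀ r : R, H.comul (ι r) =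
      TensorProduct.map ι.toLinearMap ι.toLinearMap (Coalgebra.comul r)) ∧
  (∀ r : R, H.antipode (ι r) = ι (HopfAlgebra.antipode (R := k) r))

/-- Build a `Coalgebra` instance from a `HopfAlgebraStructure`. -/
noncomputable def HopfAlgebraStructure.toCoalgebra {k T : Type*} [Field k] [Ring T]
    [Algebra k T] (H : HopfAlgebraStructure k T) : Coalgebra k T where
  comul := H.comul
  counit := H.counit
  coassoc := by
    apply LinearMap.ext; intro t'
    show (TensorProduct.assoc k T T T)
        (TensorProduct.map H.comul LinearMap.id (H.comul t'))
      = TensorProduct.map LinearMap.id H.comul (H.comul t')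
    rw [H.coassoc t']
    exact (TensorProduct.assoc k T T T).apply_symm_apply _
  rTensor_counit_comp_comul := by
    apply LinearMap.ext; intro t'
    show TensorProduct.map H.counit LinearMap.id (H.comul t') = (1 : k) ⊗ₜ[k] t'
    have h := congrArg (TensorProduct.lid k T).symm (H.counit_comul t')
    rw [LinearEquiv.symm_apply_apply] at h
    rw [h]
    rfl
  lTensor_counit_comp_comul := by
    apply LinearMap.ext; intro t'
    show TensorProduct.map LinearMap.id H.counit (H.comul t') = t' ⊗ₜ[k] (1 : k)
    have h := congrArg (TensorProduct.rid k T).symm (H.comul_counit t')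
    rw [LinearEquiv.symm_apply_apply] at h
    rw [h]
    rfl

noncomputable def HopfAlgebraStructure.toHopfAlgebra {k T : Type*} [Field k] [Ring T]
    [Algebra k T] (H : HopfAlgebraStructure k T) : HopfAlgebra k T :=
  letI : Coalgebra k T := H.toCoalgebra
  letI : Bialgebra k T := Bialgebra.mk' k T H.counit_one (fun {a b} => H.counit_mul a b)
    H.comul_one (fun {a b} => H.comul_mul a b)
  { antipode := H.antipode
    mul_antipode_rTensor_comul := by
      apply LinearMap.ext; intro t'
      exact H.antipode_mul_id t'
    mul_antipode_lTensor_comul := by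
      apply LinearMap.ext; intro t'
      exact H.id_mul_antipode t' }

/-- Let `R` be a Hopf `k`-algebra that is a domain and suppose the Ore extension
`T = R[x; σ, δ]` is a Hopf algebra containing `R` as a Hopf subalgebra, with `ε(x) = 0` and
`Δ(x) = s(1⊗x) + t(x⊗1) + v(x⊗x) + w`.  If the antipode of `T` satisfies `S(x) = ax + b`
with `a, b ∈ R` and `a` a unit of `R`, then `∑ S(v₁)v₂ = 0` in `R` and
`∑ ε(v₁)ε(v₂) = 0` in `k`. -/
theorem stmt14 {k R T : Type*} [Field k] [Ring R] [HopfAlgebra k R] [IsDomain R]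
    [Ring T] [Algebra k T]
    (σ : R ≃ₐ[k] R) (δ : R →ₗ[k] R) (ι : R →ₐ[k] T) (x : T)
    (hT : IsOreExtension k σ δ ι x)
    (H : HopfAlgebraStructure k T) (hH : ExtendsHopf k ι H)
    (hε : H.counit x = 0)
    (s t v w : R ⊗[k] R)
    (hx : H.comul x
        = TensorProduct.map ι.toLinearMap ι.toLinearMap s * ((1 : T) ⊗ₜ[k] x)
          + TensorProduct.map ι.toLinearMap ι.toLinearMap t * (x ⊗ₜ[k] (1 : T))
          + TensorProduct.map ι.toLinearMap ι.toLinearMap v * (x ⊗ₜ[k] x)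
          + TensorProduct.map ι.toLinearMap ι.toLinearMap w)
    (a b : R) (ha : IsUnit a)
    (hS : H.antipode x = ι a * x + ι b) :
    LinearMap.mul' k R
        (TensorProduct.map (HopfAlgebra.antipode (R := k)) (LinearMap.id : R →ₗ[k] R) v)
      = 0 ∧
    TensorProduct.lid k k
        (TensorProduct.map (Coalgebra.counit (R := k)) (Coalgebra.counit (R := k)) v)
      = 0 := by
  letI instHT : HopfAlgebra k T := H.toHopfAlgebra
  -- the antipode of the instance is H.antipode
  have hSmul : ∀ y z : T, H.antipode (y * z) = H.antipode z * H.antipode y := by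
    intro y z
    exact hopf_antipode_mul (k := k) y z
  classical
  set SR : R →ₗ[k] R := HopfAlgebra.antipode (R := k) with hSR
  set c : R ⊗[k] R →ₗ[k] R :=
    LinearMap.mul' k R ∘ₗ TensorProduct.map SR (LinearMap.id : R →ₗ[k] R) with hc
  set Φ : T ⊗[k] T →ₗ[k] T :=
    LinearMap.mul' k T ∘ₗ TensorProduct.map H.antipode (LinearMap.id : T →ₗ[k] T) with hΦ
  have hcmul : ∀ r₁ r₂ : R, c (r₁ ⊗ₜ[k] r₂) = SR r₁ * r₂ := by
    intro r₁ r₂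
    simp [hc]
  -- the four expansion lemmas
  have L1 : ∀ u : R ⊗[k] R,
      Φ (TensorProduct.map ι.toLinearMap ι.toLinearMap u * ((1 : T) ⊗ₜ[k] x))
        = ι (c u) * x := by
    intro u
    induction u using TensorProduct.induction_on with
    | zero => simp
    | tmul r₁ r₂ =>
        rw [TensorProduct.map_tmul, Algebra.TensorProduct.tmul_mul_tmul]
        simp only [hΦ, LinearMap.comp_apply, TensorProduct.map_tmul, LinearMap.id_coe, id_eq,
          LinearMap.mul'_apply, AlgHom.toLinearMap_apply, mul_one]
        rw [hH.2.2 r₁, hcmul, map_mul, ← hSR, mul_assoc]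
    | add u u' hu hu' =>
        rw [map_add, add_mul, map_add, hu, hu', map_add, map_add, add_mul]
  have L2 : ∀ u : R ⊗[k] R,
      Φ (TensorProduct.map ι.toLinearMap ι.toLinearMap u * (x ⊗ₜ[k] (1 : T)))
        = H.antipode x * ι (c u) := by
    intro u
    induction u using TensorProduct.induction_on with
    | zero => simp
    | tmul r₁ r₂ =>
        rw [TensorProduct.map_tmul, Algebra.TensorProduct.tmul_mul_tmul]
        simp only [hΦ, LinearMap.comp_apply, TensorProduct.map_tmul, LinearMap.id_coe, id_eq,
          LinearMap.mul'_apply, AlgHom.toLinearMap_apply, mul_one]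
        rw [hSmul, hH.2.2 r₁, hcmul, map_mul, ← hSR, mul_assoc]
    | add u u' hu hu' =>
        rw [map_add, add_mul, map_add, hu, hu', map_add, map_add, mul_add]
  have L3 : ∀ u : R ⊗[k] R,
      Φ (TensorProduct.map ι.toLinearMap ι.toLinearMap u * (x ⊗ₜ[k] x))
        = H.antipode x * ι (c u) * x := by
    intro u
    induction u using TensorProduct.induction_on with
    | zero => simp
    | tmul r₁ r₂ =>
        rw [TensorProduct.map_tmul, Algebra.TensorProduct.tmul_mul_tmul]
        simp only [hΦ, LinearMap.comp_apply, TensorProduct.map_tmul, LinearMap.id_coe, id_eq,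
          LinearMap.mul'_apply, AlgHom.toLinearMap_apply]
        rw [hSmul, hH.2.2 r₁, hcmul, map_mul, ← hSR]
        rw [mul_assoc, mul_assoc, mul_assoc]
    | add u u' hu hu' =>
        rw [map_add, add_mul, map_add, hu, hu', map_add, map_add, mul_add, add_mul]
  have L4 : ∀ u : R ⊗[k] R,
      Φ (TensorProduct.map ι.toLinearMap ι.toLinearMap u) = ι (c u) := by
    intro u
    induction u using TensorProduct.induction_on with
    | zero => simp
    | tmul r₁ r₂ =>
        simp only [hΦ, LinearMap.comp_apply, TensorProduct.map_tmul, LinearMap.id_coe, id_eq,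
          LinearMap.mul'_apply, AlgHom.toLinearMap_apply]
        rw [hH.2.2 r₁, hcmul, map_mul, ← hSR]
    | add u u' hu hu' => rw [map_add, map_add, hu, hu', map_add, map_add]
  -- main equation
  have E : ι (c s) * x + H.antipode x * ι (c t) + H.antipode x * ι (c v) * x + ι (c w)
      = 0 := by
    have E0 : Φ (H.comul x) = 0 := by
      rw [hΦ]
      show LinearMap.mul' k T
        (TensorProduct.map H.antipode LinearMap.id (H.comul x)) = 0
      rw [H.antipode_mul_id x, hε, map_zero]
    rw [hx, map_add, map_add, map_add, L1, L2, L3, L4] at E0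
    exact E0
  -- substitute S(x) = a x + b
  have key : ∀ r : R, H.antipode x * ι r
      = ι (a * σ r) * x + ι (a * δ r + b * r) := by
    intro r
    rw [hS, add_mul, mul_assoc, hT.rel r, mul_add, ← mul_assoc, ← map_mul, ← map_mul,
      ← map_mul, map_add, add_assoc]
  rw [key (c t)] at E
  rw [key (c v)] at E
  rw [add_mul] at E
  -- assemble into polynomial form
  have main : ι (a * δ (c t) + b * c t + c w) * x ^ 0
      + ι (c s + (a * σ (c t) + (a * δ (c v) + b * c v))) * x ^ 1
      + ι (a * σ (c v)) * x ^ 2 = 0 := by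
    calc ι (a * δ (c t) + b * c t + c w) * x ^ 0
        + ι (c s + (a * σ (c t) + (a * δ (c v) + b * c v))) * x ^ 1
        + ι (a * σ (c v)) * x ^ 2
        = ι (c s) * x + (ι (a * σ (c t)) * x + ι (a * δ (c t) + b * c t))
            + (ι (a * σ (c v)) * x * x + ι (a * δ (c v) + b * c v) * x) + ι (c w) := by
          simp only [pow_zero, pow_one, pow_two, map_add, mul_one, add_mul, mul_assoc]
          abel
      _ = 0 := E
  -- freeness: extract coefficient of x^2
  have coeff2 : a * σ (c v) = 0 := by
    obtain ⟨g, hg, huniq⟩ := hT.free 0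
    have hfsum : ((Finsupp.single 0 (a * δ (c t) + b * c t + c w)
        + Finsupp.single 1 (c s + (a * σ (c t) + (a * δ (c v) + b * c v)))
        + Finsupp.single 2 (a * σ (c v))) : ℕ →₀ R).sum (fun i r => ι r * x ^ i)
        = ι (a * δ (c t) + b * c t + c w) * x ^ 0
          + ι (c s + (a * σ (c t) + (a * δ (c v) + b * c v))) * x ^ 1
          + ι (a * σ (c v)) * x ^ 2 := by
      rw [Finsupp.sum_add_index' (by intro i; simp) (by intro i r r'; rw [map_add, add_mul]),
        Finsupp.sum_add_index' (by intro i; simp) (by intro i r r'; rw [map_add, add_mul]),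
        Finsupp.sum_single_index (by simp), Finsupp.sum_single_index (by simp),
        Finsupp.sum_single_index (by simp)]
    have h1 : (0 : T) = ((Finsupp.single 0 (a * δ (c t) + b * c t + c w)
        + Finsupp.single 1 (c s + (a * σ (c t) + (a * δ (c v) + b * c v)))
        + Finsupp.single 2 (a * σ (c v))) : ℕ →₀ R).sum (fun i r => ι r * x ^ i) := by
      rw [hfsum, main]
    have h2 : (0 : T) = (0 : ℕ →₀ R).sum (fun i r => ι r * x ^ i) := by simp
    have hzero := (huniq _ h1).trans (huniq _ h2).symm
    have := DFunLike.congr_fun hzero 2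
    simpa using this
  have hcv : c v = 0 := by
    have h1 : σ (c v) = 0 := by
      rcases mul_eq_zero.mp coeff2 with h | h
      · exact absurd h ha.ne_zero
      · exact h
    have := σ.injective (by rw [h1, map_zero] : σ (c v) = σ 0)
    exact this
  constructor
  · exact hcv
  · have hεc : ∀ u : R ⊗[k] R,
        TensorProduct.lid k k
          (TensorProduct.map (Coalgebra.counit (R := k)) (Coalgebra.counit (R := k)) u)
        = counit (R := k) (c u) := by
      intro u
      induction u using TensorProduct.induction_on with
      | zero => simp
      | tmul r₁ r₂ =>
          rw [TensorProduct.map_tmul, TensorProduct.lid_tmul, hcmul, Bialgebra.counit_mul,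
            hSR, hopf_counit_antipode, smul_eq_mul]
      | add u u' hu hu' => rw [map_add, map_add, hu, hu', map_add, map_add]
    rw [hεc v, hcv, map_zero]
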